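/- Assume the set N₀ = {0} ∪ {α ∈ C : h(α) = 0 and |α| = δ₀} has exactly Q = q^d elements (i.e., h admits the canonical submodule). Then the monic polynomial Φ₀(X) = ∏_{α ∈ N₀}(X − α) of degree q^d satisfies Φ₀(X) ≡ X^{q^d} modulo elements of positive valuation: every non-leading coefficient γ of Φ₀ satisfies v(γ) > 0. In other words, the canonical submodule scheme is a lift of the q^d-power Frobenius. -/
import Mathlib

open Polynomial

private lemma aux_norm_sub {C : Type*} [NontriviallyNormedField C] [IsUltrametricDist C]
    (x y : C) : ‖x - y‖ ≤ max ‖x‖ ‖y‖ := by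
  rw [sub_eq_add_neg]
  simpa using IsUltrametricDist.norm_add_le_max x (-y)

private lemma aux_coeff_le {C : Type*} [NontriviallyNormedField C] [IsUltrametricDist C]
    (s : Finset C) (hs : ∀ α ∈ s, ‖α‖ ≤ 1) :
    ∀ j, ‖(∏ α ∈ s, (X - Polynomial.C α)).coeff j‖ ≤ 1 := by
  classical
  induction s using Finset.induction_on with
  | empty =>
    intro j
    simp only [Finset.prod_empty, Polynomial.coeff_one]
    split <;> simp
  | @insert a t ha ih =>
    intro j
    have hs' : ∀ α ∈ t, ‖α‖ ≤ 1 := fun α hα => hs α (Finset.mem_insert_of_mem hα)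
    have ha1 : ‖a‖ ≤ 1 := hs a (Finset.mem_insert_self a t)
    rw [Finset.prod_insert ha, mul_comm]
    cases j with
    | zero =>
      simp only [Polynomial.mul_coeff_zero, Polynomial.coeff_sub, Polynomial.coeff_X_zero,
        Polynomial.coeff_C_zero, zero_sub, norm_mul, norm_neg]
      calc ‖(∏ α ∈ t, (X - Polynomial.C α)).coeff 0‖ * ‖a‖ ≤ 1 * 1 :=
            mul_le_mul (ih hs' 0) ha1 (norm_nonneg _) zero_le_one
        _ = 1 := by ring
    | succ k =>
      rw [Polynomial.coeff_mul_X_sub_C]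
      refine (aux_norm_sub _ _).trans (max_le (ih hs' k) ?_)
      calc ‖(∏ α ∈ t, (X - Polynomial.C α)).coeff (k + 1) * a‖
          = ‖a‖ * ‖(∏ α ∈ t, (X - Polynomial.C α)).coeff (k + 1)‖ := by rw [norm_mul, mul_comm]
        _ ≤ 1 * 1 := mul_le_mul ha1 (ih hs' (k + 1)) (norm_nonneg _) zero_le_one
        _ = 1 := by ring

private lemma aux_coeff_lt {C : Type*} [NontriviallyNormedField C] [IsUltrametricDist C]
    (s : Finset C) (hs : ∀ α ∈ s, ‖α‖ < 1) :
    ∀ j < s.card, ‖(∏ α ∈ s, (X - Polynomial.C α)).coeff j‖ < 1 := by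
  classical
  induction s using Finset.induction_on with
  | empty => intro j hj; simp at hj
  | @insert a t ha ih =>
    intro j hj
    have hs' : ∀ α ∈ t, ‖α‖ < 1 := fun α hα => hs α (Finset.mem_insert_of_mem hα)
    have hsle : ∀ α ∈ t, ‖α‖ ≤ 1 := fun α hα => (hs' α hα).le
    have ha1 : ‖a‖ < 1 := hs a (Finset.mem_insert_self a t)
    rw [Finset.prod_insert ha, mul_comm]
    cases j with
    | zero =>
      simp only [Polynomial.mul_coeff_zero, Polynomial.coeff_sub, Polynomial.coeff_X_zero,
        Polynomial.coeff_C_zero, zero_sub, norm_mul, norm_neg]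
      calc ‖(∏ α ∈ t, (X - Polynomial.C α)).coeff 0‖ * ‖a‖ ≤ 1 * ‖a‖ :=
            mul_le_mul_of_nonneg_right (aux_coeff_le t hsle 0) (norm_nonneg _)
        _ = ‖a‖ := one_mul _
        _ < 1 := ha1
    | succ k =>
      rw [Finset.card_insert_of_notMem ha, Nat.succ_lt_succ_iff] at hj
      rw [Polynomial.coeff_mul_X_sub_C]
      refine (aux_norm_sub _ _).trans_lt (max_lt (ih hs' k hj) ?_)
      calc ‖(∏ α ∈ t, (X - Polynomial.C α)).coeff (k + 1) * a‖
          = ‖a‖ * ‖(∏ α ∈ t, (X - Polynomial.C α)).coeff (k + 1)‖ := by rw [norm_mul, mul_comm]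
        _ ≤ ‖a‖ * 1 := mul_le_mul_of_nonneg_left (aux_coeff_le t hsle (k + 1)) (norm_nonneg _)
        _ = ‖a‖ := mul_one _
        _ < 1 := ha1

/-- If `N₀ = {0} ∪ {α : h(α) = 0, ‖α‖ = δ₀}` has exactly `q^d` elements, then
`Φ₀(X) = ∏_{α ∈ N₀} (X - α)` is a monic polynomial of degree `q^d` all of whose non-leading
coefficients have positive valuation (norm `< 1`); i.e. `Φ₀ ≡ X^{q^d}` modulo the maximal
ideal, so the canonical submodule scheme is a lift of the `q^d`-power Frobenius. -/
theorem canonical_factor_is_frobenius_lift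
    {C : Type*} [NontriviallyNormedField C] [IsUltrametricDist C] [CompleteSpace C]
    [IsAlgClosed C]
    (p : ℕ) (hp : p.Prime) [CharP C p]
    (q : ℕ) (n : ℕ) (hn : 0 < n) (hq : q = p ^ n)
    (d : ℕ) (hd : 1 ≤ d)
    (π : C) (hπ0 : π ≠ 0) (hπ1 : ‖π‖ < 1)
    (r : ℕ) (hr : 2 ≤ r)
    (H : ℕ → C) (hHint : ∀ i, ‖H i‖ ≤ 1) (hH0 : H 0 = π) (hHrd : ‖H (r * d)‖ = 1)
    (h : Polynomial C)
    (hh : h = ∑ i ∈ Finset.range (r * d + 1), Polynomial.C (H i) * Polynomial.X ^ q ^ i)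
    -- every nonzero root of h has positive valuation
    (hroots : ∀ α : C, Polynomial.eval α h = 0 → α ≠ 0 → ‖α‖ < 1)
    (δ₀ : ℝ)
    (hδ₀ : IsLeast {t : ℝ | ∃ α : C, α ≠ 0 ∧ Polynomial.eval α h = 0 ∧ t = ‖α‖} δ₀)
    (N₀ : Set C)
    (hN₀ : N₀ = {0} ∪ {α : C | Polynomial.eval α h = 0 ∧ ‖α‖ = δ₀})
    (hfin : N₀.Finite)
    (hcard : hfin.toFinset.card = q ^ d)
    (Φ₀ : Polynomial C)
    (hΦ₀ : Φ₀ = ∏ α ∈ hfin.toFinset, (Polynomial.X - Polynomial.C α)) :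
    Φ₀.Monic ∧ Φ₀.natDegree = q ^ d ∧ ∀ j < q ^ d, ‖Φ₀.coeff j‖ < 1 := by
  have hδ₀lt : δ₀ < 1 := by
    obtain ⟨α, hα0, hαroot, hαeq⟩ := hδ₀.1
    rw [hαeq]; exact hroots α hαroot hα0
  have hmem : ∀ α ∈ hfin.toFinset, ‖α‖ < 1 := by
    intro α hα
    rw [Set.Finite.mem_toFinset, hN₀] at hα
    rcases hα with hα | hα
    · simp only [Set.mem_singleton_iff] at hα; simp [hα]
    · rw [hα.2]; exact hδ₀lt
  have hmonic : Φ₀.Monic := by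
    rw [hΦ₀]; exact monic_prod_of_monic _ _ fun α _ => monic_X_sub_C α
  refine ⟨hmonic, ?_, ?_⟩
  · rw [hΦ₀, Polynomial.natDegree_prod_of_monic _ _ fun α _ => monic_X_sub_C α]
    simp [hcard]
  · intro j hj
    rw [hΦ₀]
    exact aux_coeff_lt _ hmem j (by rw [hcard]; exact hj)
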